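/- arXiv:2401.07936 — 3 statements merged into one kernel-verified Lean document; each statement's English description precedes it below -/
import Mathlib

section
/- Let (a^k) be a sequence of reals with a^k > a* for all k and a^k → a*, and suppose there exist C > 0, K₀ ∈ ℕ, q ∈ ℕ with q ≥ 1, and ξ ∈ ℝ with 1/(2(q+1)) < ξ < 1/(2q) such that a^k − a* ≥ a^{k+1} − a* + C (a^{k+1} − a*)^{2ξ} for all k ≥ K₀. Then lim_{k→∞} (a^{k+1} − a*)/(a^k − a*)^q = 0, i.e., the sequence converges to a* with Q-order strictly greater than q. -/
open Filter

theorem superq_loss_convergence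
    (a : ℕ → ℝ) (astar : ℝ) (ha : ∀ k, astar < a k)
    (hlim : Tendsto a atTop (nhds astar))
    (C : ℝ) (hC : 0 < C) (K₀ : ℕ) (q : ℕ) (hq : 1 ≤ q) (ξ : ℝ)
    (hξ₁ : 1 / (2 * ((q : ℝ) + 1)) < ξ) (hξ₂ : ξ < 1 / (2 * (q : ℝ)))
    (hrec : ∀ k ≥ K₀, a k - astar ≥ (a (k + 1) - astar)
        + C * (a (k + 1) - astar) ^ (2 * ξ)) :
    Tendsto (fun k => (a (k + 1) - astar) / (a k - astar) ^ q) atTop (nhds 0) := by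
  set E : ℕ → ℝ := fun k => a k - astar with hEdef
  have hE : ∀ k, 0 < E k := fun k => sub_pos.mpr (ha k)
  have hq0 : (0:ℝ) < q := by exact_mod_cast hq
  have hξpos : 0 < ξ := lt_trans (by positivity) hξ₁
  have h2ξ : 0 < 2 * ξ := by linarith
  set β : ℝ := 1 / (2 * ξ) with hβ
  have hβpos : 0 < β := by positivity
  have hqβ : (q:ℝ) < β := by
    rw [hβ, lt_div_iff₀ h2ξ]
    have h1 : ξ * (2 * q) < 1 := (lt_div_iff₀ (by positivity)).mp hξ₂
    nlinarith
  set α : ℝ := β - q with hα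
  have hαpos : 0 < α := by simp [hα]; linarith
  -- E tends to 0
  have hE0 : Tendsto E atTop (nhds 0) := by
    have := hlim.sub_const astar
    simpa using this
  -- upper bound function tends to 0
  have hg : Tendsto (fun k => (E k) ^ α / C ^ β) atTop (nhds 0) := by
    have h1 : Tendsto (fun k => (E k) ^ α) atTop (nhds ((0:ℝ) ^ α)) :=
      hE0.rpow_const (Or.inr hαpos.le)
    rw [Real.zero_rpow hαpos.ne'] at h1
    simpa using h1.div_const (C ^ β)
  refine squeeze_zero' ?_ ?_ hg
  · filter_upwards with k
    exact div_nonneg (hE (k+1)).le (pow_nonneg (hE k).le q)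
  · filter_upwards [eventually_ge_atTop K₀] with k hk
    have hrk := hrec k hk
    have h1 : C * (E (k+1)) ^ (2*ξ) ≤ E k := by
      have := (hE (k+1)).le
      simp only [hEdef] at *
      linarith
    have h2 : (E (k+1)) ^ (2*ξ) ≤ E k / C := by
      rw [le_div_iff₀ hC]; linarith
    have h3 : E (k+1) ≤ (E k / C) ^ β := by
      have h4 : ((E (k+1)) ^ (2*ξ)) ^ β ≤ (E k / C) ^ β :=
        Real.rpow_le_rpow (Real.rpow_nonneg (hE (k+1)).le _) h2 hβpos.le
      rwa [← Real.rpow_mul (hE (k+1)).le,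
        show (2*ξ) * β = 1 by rw [hβ]; exact mul_one_div_cancel h2ξ.ne', Real.rpow_one] at h4
    calc E (k+1) / E k ^ q ≤ (E k / C) ^ β / E k ^ q := by
          gcongr
          exact pow_nonneg (hE k).le q
        _ = E k ^ α / C ^ β := by
          rw [Real.div_rpow (hE k).le hC.le, div_right_comm,
            ← Real.rpow_natCast (E k) q, ← Real.rpow_sub (hE k), hα]
end

section
/- Let ξ ∈ (1/2, 1) and let (S_k) be a nonincreasing sequence of nonnegative reals converging to 0 with S_k^{ξ/(1−ξ)} ≤ C (S_{k−1} − S_k) for all k ≥ K₀ and some C > 0. Then there exists a constant C' > 0 such that S_k ≤ C' k^{−(1−ξ)/(2ξ−1)} for all sufficiently large k. -/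
open Filter

private lemma bern_neg {x p : ℝ} (hx0 : 0 < x) (hx1 : x ≤ 1) (hp : 0 < p) :
    1 + p * (1 - x) ≤ x ^ (-p) := by
  rcases le_or_gt p 1 with hp1 | hp1
  · have h1 : (1 + (x - 1)) ^ p ≤ 1 + p * (x - 1) :=
      rpow_one_add_le_one_add_mul_self (by linarith) hp.le hp1
    have h2 : x ^ p ≤ 1 + p * (x - 1) := by simpa using h1
    have hd : 0 < 1 + p * (x - 1) := by nlinarith
    have hxp : 0 < x ^ p := Real.rpow_pos_of_pos hx0 p
    have h3 : (1 + p * (x - 1))⁻¹ ≤ (x ^ p)⁻¹ := by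
      apply inv_anti₀ hxp h2
    have h4 : 1 + p * (1 - x) ≤ (1 + p * (x - 1))⁻¹ := by
      rw [inv_eq_one_div, le_div_iff₀ hd]
      nlinarith [sq_nonneg (p * (x - 1))]
    rw [Real.rpow_neg hx0.le]
    exact h4.trans h3
  · have hs : (-1 : ℝ) ≤ 1 / x - 1 := by
      have := one_div_pos.mpr hx0
      linarith
    have h1 : 1 + p * (1 / x - 1) ≤ (1 + (1 / x - 1)) ^ p :=
      one_add_mul_self_le_rpow_one_add hs hp1.le
    have h2 : (1 + (1 / x - 1)) ^ p = x ^ (-p) := by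
      rw [show 1 + (1 / x - 1) = x⁻¹ by field_simp; ring, Real.inv_rpow hx0.le,
        Real.rpow_neg hx0.le]
    have h3 : 1 - x ≤ 1 / x - 1 := by
      rw [div_sub' hx0.ne', le_div_iff₀ hx0]
      nlinarith
    have h4 : 1 + p * (1 - x) ≤ 1 + p * (1 / x - 1) := by nlinarith
    linarith [h2 ▸ h1]

theorem sublinear_rate_KL
    (S : ℕ → ℝ) (ξ : ℝ) (hξ₁ : 1 / 2 < ξ) (hξ₂ : ξ < 1)
    (hnn : ∀ k, 0 ≤ S k) (hmono : ∀ k, S (k + 1) ≤ S k)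
    (hlim : Tendsto S atTop (nhds 0))
    (C : ℝ) (hC : 0 < C) (K₀ : ℕ)
    (hrec : ∀ k ≥ K₀, S (k + 1) ^ (ξ / (1 - ξ)) ≤ C * (S k - S (k + 1))) :
    ∃ C' > (0:ℝ), ∃ K₁ : ℕ, ∀ k ≥ K₁, S k ≤ C' * (k : ℝ) ^ (-(1 - ξ) / (2 * ξ - 1)) := by
  have h1ξ : 0 < 1 - ξ := by linarith
  set θ : ℝ := ξ / (1 - ξ) with hθdef
  have hθ : 1 < θ := by
    rw [hθdef, lt_div_iff₀ h1ξ]; linarith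
  have hz : 1 - θ < 0 := by linarith
  have hexp : 1 / (1 - θ) = -(1 - ξ) / (2 * ξ - 1) := by
    have h4 : (1:ℝ) - ξ ≠ 0 := by linarith
    have e1 : 1 - θ = (1 - 2 * ξ) / (1 - ξ) := by
      rw [hθdef]; field_simp; ring
    rw [e1, one_div_div, div_eq_div_iff (ne_of_lt (by linarith : (1:ℝ) - 2 * ξ < 0))
      (ne_of_gt (by linarith : (0:ℝ) < 2 * ξ - 1))]
    ring
  by_cases hzero : ∃ N, S N = 0
  · -- trivial case: S eventually zero
    obtain ⟨N, hN⟩ := hzero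
    refine ⟨1, one_pos, N + 1, fun k hk => ?_⟩
    have hSk : S k = 0 := by
      have hle : ∀ m, S (N + m) ≤ S N := by
        intro m
        induction m with
        | zero => simp
        | succ n ih => calc S (N + (n+1)) = S ((N + n) + 1) := rfl
                          _ ≤ S (N + n) := hmono _
                          _ ≤ S N := ih
      have := hle (k - N)
      rw [Nat.add_sub_cancel' (by omega : N ≤ k)] at this
      exact le_antisymm (hN ▸ this) (hnn k)
    have hkpos : (0:ℝ) < (k : ℝ) := by exact_mod_cast (by omega : 0 < k)
    have hp := Real.rpow_pos_of_pos hkpos (-(1 - ξ) / (2 * ξ - 1))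
    rw [hSk, one_mul]
    exact hp.le
  · push_neg at hzero
    have hpos : ∀ k, 0 < S k := fun k => (hnn k).lt_of_ne' (hzero k)
    set u : ℕ → ℝ := fun k => S k ^ (1 - θ) with hu
    have hupos : ∀ k, 0 < u k := fun k => Real.rpow_pos_of_pos (hpos k) _
    have humono : ∀ j k, j ≤ k → u j ≤ u k := by
      have step : ∀ k, u k ≤ u (k + 1) := fun k =>
        Real.rpow_le_rpow_of_nonpos (hpos (k+1)) (hmono k) hz.le
      intro j k hjk
      exact monotone_nat_of_le_succ step hjk
    have h2exp : (1:ℝ) < (2:ℝ) ^ (θ - 1) := by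
      rw [Real.one_lt_rpow_iff_of_pos (by norm_num)]
      left; constructor <;> [norm_num; linarith]
    -- the constant increment
    set c₁ : ℝ := ((2:ℝ) ^ (θ - 1) - 1) * u K₀ with hc₁
    set c₂ : ℝ := (θ - 1) / C * (1/2 : ℝ) ^ θ with hc₂
    have hc₁pos : 0 < c₁ := mul_pos (by linarith) (hupos K₀)
    have hc₂pos : 0 < c₂ :=
      mul_pos (div_pos (by linarith) hC) (Real.rpow_pos_of_pos (by norm_num) θ)
    set c : ℝ := min c₁ c₂ with hc'
    have hcpos : 0 < c := lt_min hc₁pos hc₂pos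
    have key : ∀ k ≥ K₀, u k + c ≤ u (k + 1) := by
      intro k hk
      have ha0 : 0 < S k := hpos k
      have hb0 : 0 < S (k + 1) := hpos (k + 1)
      have hba : S (k + 1) ≤ S k := hmono k
      have huk : u k = S k ^ (1 - θ) := rfl
      have huk1 : u (k + 1) = S (k + 1) ^ (1 - θ) := rfl
      by_cases hcase : S (k + 1) ≤ S k / 2
      · -- fast decrease
        have h1 : (S k / 2) ^ (1 - θ) ≤ S (k + 1) ^ (1 - θ) :=
          Real.rpow_le_rpow_of_nonpos hb0 hcase hz.le
        have h2 : (S k / 2) ^ (1 - θ) = S k ^ (1 - θ) * (2:ℝ) ^ (θ - 1) := by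
          rw [Real.div_rpow ha0.le (by norm_num), show (θ - 1) = -(1 - θ) by ring,
            Real.rpow_neg (by norm_num : (0:ℝ) ≤ 2), div_eq_mul_inv]
        have h3 : u k * (2:ℝ) ^ (θ - 1) ≤ u (k + 1) := by
          rw [huk, huk1, ← h2]; exact h1
        have h4 : c ≤ c₁ := min_le_left _ _
        have h5 : u K₀ ≤ u k := humono _ _ hk
        have hupk := hupos k
        calc u k + c ≤ u k + ((2:ℝ) ^ (θ - 1) - 1) * u K₀ := by
              rw [← hc₁]; linarith
          _ ≤ u k + ((2:ℝ) ^ (θ - 1) - 1) * u k := by nlinarith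
          _ = u k * (2:ℝ) ^ (θ - 1) := by ring
          _ ≤ u (k + 1) := h3
      · -- slow decrease, use Bernoulli
        push_neg at hcase
        have hx0 : 0 < S (k + 1) / S k := by positivity
        have hx1 : S (k + 1) / S k ≤ 1 := (div_le_one ha0).mpr hba
        have hbern : 1 + (θ - 1) * (1 - S (k + 1) / S k) ≤ (S (k + 1) / S k) ^ (-(θ - 1)) :=
          bern_neg hx0 hx1 (by linarith)
        have hrw : (S (k + 1) / S k) ^ (-(θ - 1)) = S (k + 1) ^ (1 - θ) / S k ^ (1 - θ) := by
          rw [show -(θ - 1) = 1 - θ by ring, Real.div_rpow hb0.le ha0.le]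
        rw [hrw] at hbern
        have hap : 0 < S k ^ (1 - θ) := Real.rpow_pos_of_pos ha0 _
        have h6 : S k ^ (1 - θ) + (θ - 1) * (1 - S (k + 1) / S k) * S k ^ (1 - θ)
            ≤ S (k + 1) ^ (1 - θ) := by
          have := mul_le_mul_of_nonneg_right hbern hap.le
          rw [div_mul_cancel₀ _ hap.ne'] at this
          linarith [this]
        have h7 : (1 - S (k + 1) / S k) * S k ^ (1 - θ)
            = (S k - S (k + 1)) * S k ^ (-θ) := by
          have hh : S k ^ (1 - θ) = S k * S k ^ (-θ) := by
            rw [show (1 - θ) = 1 + (-θ) by ring, Real.rpow_add ha0, Real.rpow_one]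
          rw [hh]
          field_simp
        have h8 : S (k + 1) ^ θ / C ≤ S k - S (k + 1) := by
          rw [div_le_iff₀ hC]
          have h := hrec k hk
          calc S (k + 1) ^ θ = S (k + 1) ^ (ξ / (1 - ξ)) := by rw [hθdef]
            _ ≤ C * (S k - S (k + 1)) := h
            _ = (S k - S (k + 1)) * C := by ring
        have hanegθ : 0 < S k ^ (-θ) := Real.rpow_pos_of_pos ha0 _
        have h9 : (S (k + 1) ^ θ / C) * S k ^ (-θ) ≤ (S k - S (k + 1)) * S k ^ (-θ) :=
          mul_le_mul_of_nonneg_right h8 hanegθ.le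
        have h10 : S (k + 1) ^ θ * S k ^ (-θ) = (S (k + 1) / S k) ^ θ := by
          rw [Real.div_rpow hb0.le ha0.le, Real.rpow_neg ha0.le, div_eq_mul_inv]
        have h11 : (1/2 : ℝ) ^ θ ≤ (S (k + 1) / S k) ^ θ := by
          apply Real.rpow_le_rpow (by norm_num) _ (by linarith)
          rw [le_div_iff₀ ha0]; linarith
        have hCinv : 0 < (θ - 1) / C := div_pos (by linarith) hC
        have h12 : c₂ ≤ (S k - S (k + 1)) * S k ^ (-θ) * (θ - 1) := by
          calc c₂ = (θ - 1) / C * (1/2 : ℝ) ^ θ := rfl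
            _ ≤ (θ - 1) / C * (S (k + 1) / S k) ^ θ :=
                mul_le_mul_of_nonneg_left h11 hCinv.le
            _ = (S (k + 1) ^ θ / C) * S k ^ (-θ) * (θ - 1) := by
                rw [← h10]; ring
            _ ≤ (S k - S (k + 1)) * S k ^ (-θ) * (θ - 1) :=
                mul_le_mul_of_nonneg_right h9 (by linarith)
        have h13 : c ≤ c₂ := min_le_right _ _
        calc u k + c
            ≤ S k ^ (1 - θ) + (θ - 1) * ((S k - S (k + 1)) * S k ^ (-θ)) := by
              rw [huk]; linarith
          _ = S k ^ (1 - θ) + (θ - 1) * (1 - S (k + 1) / S k) * S k ^ (1 - θ) := by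
              rw [← h7]; ring
          _ ≤ S (k + 1) ^ (1 - θ) := h6
          _ = u (k + 1) := rfl
    -- iterate
    have iter : ∀ n : ℕ, u K₀ + c * n ≤ u (K₀ + n) := by
      intro n
      induction n with
      | zero => simp
      | succ m ih =>
        have hstep := key (K₀ + m) (Nat.le_add_right _ _)
        push_cast
        calc u K₀ + c * ((m:ℝ) + 1) = (u K₀ + c * m) + c := by ring
          _ ≤ u (K₀ + m) + c := by linarith
          _ ≤ u (K₀ + m + 1) := hstep
          _ = u (K₀ + (m + 1)) := rfl
    -- final constant
    refine ⟨(c / 2) ^ (1 / (1 - θ)), Real.rpow_pos_of_pos (by linarith) _, 2 * K₀ + 2,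
      fun k hk => ?_⟩
    have hkK : K₀ ≤ k := by omega
    have hlow : c * ((k : ℝ) / 2) ≤ u k := by
      have h1 := iter (k - K₀)
      rw [Nat.add_sub_cancel' hkK] at h1
      have h2 : ((k - K₀ : ℕ) : ℝ) = (k : ℝ) - K₀ := by
        push_cast [Nat.cast_sub hkK]; ring
      have h3 : (k : ℝ) / 2 ≤ (k : ℝ) - K₀ := by
        have : (2 * K₀ : ℝ) ≤ k := by exact_mod_cast (by omega : 2 * K₀ ≤ k)
        linarith
      have h4 : c * ((k:ℝ)/2) ≤ c * ((k:ℝ) - K₀) :=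
        mul_le_mul_of_nonneg_left h3 hcpos.le
      rw [h2] at h1
      linarith [hupos K₀]
    have hkpos : (0:ℝ) < (k:ℝ) := by exact_mod_cast (by omega : 0 < k)
    have hck : 0 < c * ((k : ℝ) / 2) := by positivity
    have hexpneg : 1 / (1 - θ) ≤ 0 := by
      apply div_nonpos_of_nonneg_of_nonpos <;> linarith
    have h5 : (u k) ^ (1 / (1 - θ)) ≤ (c * ((k:ℝ)/2)) ^ (1 / (1 - θ)) :=
      Real.rpow_le_rpow_of_nonpos hck hlow hexpneg
    have h6 : (u k) ^ (1 / (1 - θ)) = S k := by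
      show (S k ^ (1 - θ)) ^ (1 / (1 - θ)) = S k
      rw [← Real.rpow_mul (hnn k), mul_one_div,
        div_self (by linarith : (1:ℝ) - θ ≠ 0), Real.rpow_one]
    have h7 : (c * ((k:ℝ)/2)) ^ (1 / (1 - θ))
        = (c / 2) ^ (1 / (1 - θ)) * (k:ℝ) ^ (1 / (1 - θ)) := by
      rw [show c * ((k:ℝ)/2) = (c/2) * (k:ℝ) by ring,
        Real.mul_rpow (by linarith) hkpos.le]
    rw [← hexp, ← h6]
    rw [h7] at h5
    exact h5
end

section
/- Let q ∈ ℕ with q ≥ 2, λ > 0, and let f : ℝ^n → ℝ be defined by f(x) = ‖x‖^{2q/(2q−1)}. Let x^k ≠ 0 and let x^{k+1} ≠ 0 satisfy the proximal optimality condition x^{k+1} = x^k − (2qλ/(2q−1)) ‖x^{k+1}‖^{2(1−q)/(2q−1)} x^{k+1}. Then ‖x^{k+1}‖ / ‖x^k‖^{2q−1} ≤ 1 / ((2qλ/(2q−1))^{2q−1}). -/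
theorem proximal_step_convergence_order
    (n q : ℕ) (hq : 2 ≤ q) (lam : ℝ) (hlam : 0 < lam)
    (xk xk1 : EuclideanSpace ℝ (Fin n)) (hxk : xk ≠ 0) (hxk1 : xk1 ≠ 0)
    (hopt : xk1 = xk - ((2 * (q : ℝ) * lam / (2 * (q : ℝ) - 1)) *
      ‖xk1‖ ^ ((2 * (1 - (q : ℝ))) / (2 * (q : ℝ) - 1))) • xk1) :
    ‖xk1‖ / ‖xk‖ ^ (2 * q - 1) ≤ 1 / ((2 * (q : ℝ) * lam / (2 * (q : ℝ) - 1)) ^ (2 * q - 1)) := by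
  have ht : (0:ℝ) < ‖xk1‖ := norm_pos_iff.mpr hxk1
  have hs : (0:ℝ) < ‖xk‖ := norm_pos_iff.mpr hxk
  have hq2 : (2:ℝ) ≤ (q:ℝ) := by exact_mod_cast hq
  have hden : (0:ℝ) < 2*(q:ℝ) - 1 := by linarith
  set c : ℝ := 2*(q:ℝ)*lam/(2*(q:ℝ)-1) with hc
  have hcpos : 0 < c := by
    apply div_pos _ hden
    nlinarith
  set α : ℝ := (2*(1-(q:ℝ)))/(2*(q:ℝ)-1) with hα
  have hxkeq : xk = (1 + c * ‖xk1‖ ^ α) • xk1 := by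
    rw [eq_sub_iff_add_eq] at hopt
    rw [← hopt, add_smul, one_smul, add_comm]
  have hrp : 0 < ‖xk1‖ ^ α := Real.rpow_pos_of_pos ht α
  have hnorm : ‖xk‖ = (1 + c * ‖xk1‖ ^ α) * ‖xk1‖ := by
    rw [hxkeq, norm_smul, Real.norm_eq_abs, abs_of_pos]
    nlinarith
  have h1 : ‖xk1‖ ^ α * ‖xk1‖ = ‖xk1‖ ^ ((1:ℝ)/(2*(q:ℝ)-1)) := by
    rw [← Real.rpow_add_one ht.ne' α]
    congr 1
    rw [hα]
    field_simp
    ring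
  have key : c * ‖xk1‖ ^ ((1:ℝ)/(2*(q:ℝ)-1)) ≤ ‖xk‖ := by
    rw [hnorm, ← h1]
    nlinarith
  have hm : ((2*q - 1 : ℕ) : ℝ) = 2*(q:ℝ) - 1 := by
    push_cast [Nat.cast_sub (by omega : 1 ≤ 2*q)]
    ring
  have hpow : c ^ (2*q-1) * ‖xk1‖ ≤ ‖xk‖ ^ (2*q-1) := by
    have := pow_le_pow_left₀ (by positivity) key (2*q-1)
    calc c ^ (2*q-1) * ‖xk1‖
        = (c * ‖xk1‖ ^ ((1:ℝ)/(2*(q:ℝ)-1))) ^ (2*q-1) := by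
          rw [mul_pow, ← Real.rpow_natCast (‖xk1‖ ^ ((1:ℝ)/(2*(q:ℝ)-1))) (2*q-1),
            ← Real.rpow_mul ht.le, hm]
          rw [one_div_mul_cancel (ne_of_gt hden), Real.rpow_one]
      _ ≤ ‖xk‖ ^ (2*q-1) := this
  rw [div_le_div_iff₀ (by positivity) (by positivity)]
  nlinarith [pow_pos hcpos (2*q-1), pow_pos hs (2*q-1)]
end
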